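/- The number of permutations in S_n avoiding the patterns 2-1-3 and 34-21 equals (n-1)·2^{n-2} + 1 for n ≥ 1 (interpreting the formula as 1 when n = 1). -/

import Mathlib

/-- entry of a list at index i (default 0) -/
def E (l : List ℕ) (i : ℕ) : ℕ := l.getD i 0

def Has213 (l : List ℕ) : Prop :=
  ∃ k < l.length, ∃ j < k, ∃ i < j, E l j < E l i ∧ E l i < E l k

def Has3421 (l : List ℕ) : Prop :=
  ∃ k < l.length, ∃ i < k, i + 1 < k ∧ k + 1 < l.length ∧
    E l (k+1) < E l k ∧ E l k < E l i ∧ E l i < E l (i+1)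

def GoodL (l : List ℕ) : Prop := ¬ Has213 l ∧ ¬ Has3421 l

instance : DecidablePred Has213 := fun l => by unfold Has213; infer_instance
instance : DecidablePred Has3421 := fun l => by unfold Has3421; infer_instance
instance : DecidablePred GoodL := fun l => by unfold GoodL; infer_instance

def MinMax : List ℕ → Prop
  | [] => True
  | a :: t => ((∀ x ∈ t, a < x) ∨ (∀ x ∈ t, x < a)) ∧ MinMax t

instance : DecidablePred MinMax := fun l => by
  induction l with
  | nil => exact .isTrue trivial
  | cons a t ih => unfold MinMax; exact @instDecidableAnd _ _ _ ih

@[simp] lemma E_cons_zero (a : ℕ) (t : List ℕ) : E (a :: t) 0 = a := rfl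
@[simp] lemma E_cons_succ (a : ℕ) (t : List ℕ) (i : ℕ) : E (a :: t) (i+1) = E t i := rfl

lemma E_mem (l : List ℕ) (i : ℕ) (h : i < l.length) : E l i ∈ l := by
  rw [E, l.getD_eq_getElem 0 h]; exact l.getElem_mem h

lemma has213_cons_of (a : ℕ) (t : List ℕ) (h : Has213 t) : Has213 (a :: t) := by
  obtain ⟨k, hk, j, hj, i, hi, h1, h2⟩ := h
  exact ⟨k+1, by simpa using Nat.succ_lt_succ hk, j+1, by omega, i+1, by omega, by
    simpa using h1, by simpa using h2⟩

lemma has3421_cons_of (a : ℕ) (t : List ℕ) (h : Has3421 t) : Has3421 (a :: t) := by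
  obtain ⟨k, hk, i, hi, h0, h1, h2, h3, h4⟩ := h
  exact ⟨k+1, by simpa using Nat.succ_lt_succ hk, i+1, by omega, by omega,
    by simpa using Nat.succ_lt_succ h1, by simpa using h2, by simpa using h3,
    by simpa using h4⟩

lemma goodL_tail (a : ℕ) (t : List ℕ) (h : GoodL (a :: t)) : GoodL t :=
  ⟨fun hc => h.1 (has213_cons_of a t hc), fun hc => h.2 (has3421_cons_of a t hc)⟩

lemma goodL_cons_min {a : ℕ} {t : List ℕ} (ha : ∀ x ∈ t, a < x) :
    GoodL (a :: t) ↔ GoodL t := by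
  constructor
  · exact goodL_tail a t
  · rintro ⟨g1, g2⟩
    constructor
    · rintro ⟨k, hk, j, hj, i, hi, h1, h2⟩
      match i, j, k with
      | 0, j+1, k+1 =>
        simp only [E_cons_zero, E_cons_succ] at h1 h2
        exact absurd h1 (Nat.not_lt.2 (le_of_lt (ha _ (E_mem t j (by simp only [List.length_cons] at hk; omega)))))
      | i+1, j+1, k+1 =>
        simp only [E_cons_succ] at h1 h2
        exact g1 ⟨k, by simpa using hk, j, by omega, i, by omega, h1, h2⟩
    · rintro ⟨k, hk, i, hi, h0, h1, h2, h3, h4⟩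
      match i, k with
      | 0, k =>
        simp only [E_cons_zero] at h3
        match k, hi with
        | k+1, _ =>
          simp only [E_cons_succ] at h2
          exact absurd h3 (Nat.not_lt.2 (le_of_lt (ha _ (E_mem t k (by simpa using hk)))))
      | i+1, k+1 =>
        simp only [E_cons_succ] at h2 h3 h4
        exact g2 ⟨k, by simpa using hk, i, by omega, by omega, by simpa using h1, h2, h3, h4⟩
    
lemma goodL_cons_max {a : ℕ} {t : List ℕ} (ha : ∀ x ∈ t, x < a) :
    GoodL (a :: t) ↔ GoodL t := by
  constructor
  · exact goodL_tail a t
  · rintro ⟨g1, g2⟩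
    constructor
    · rintro ⟨k, hk, j, hj, i, hi, h1, h2⟩
      match i, j, k with
      | 0, j+1, k+1 =>
        simp only [E_cons_zero, E_cons_succ] at h1 h2
        exact absurd h2 (Nat.not_lt.2 (le_of_lt (ha _ (E_mem t k (by simpa using hk)))))
      | i+1, j+1, k+1 =>
        simp only [E_cons_succ] at h1 h2
        exact g1 ⟨k, by simpa using hk, j, by omega, i, by omega, h1, h2⟩
    · rintro ⟨k, hk, i, hi, h0, h1, h2, h3, h4⟩
      match i, k with
      | 0, k =>
        simp only [E_cons_zero, E_cons_succ] at h4
        exact absurd h4 (Nat.not_lt.2 (le_of_lt (ha _ (E_mem t 0 (by simp only [List.length_cons] at hk; omega)))))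
      | i+1, k+1 =>
        simp only [E_cons_succ] at h2 h3 h4
        exact g2 ⟨k, by simpa using hk, i, by omega, by omega, by simpa using h1, h2, h3, h4⟩

lemma exists_E_of_mem {x : ℕ} {l : List ℕ} (h : x ∈ l) : ∃ i < l.length, E l i = x := by
  obtain ⟨i, hi, he⟩ := List.mem_iff_getElem.1 h
  exact ⟨i, hi, by rw [E, l.getD_eq_getElem 0 hi, he]⟩

lemma minMax_iff (l : List ℕ) : MinMax l ↔ ∀ p < l.length,
    (∀ q, p < q → q < l.length → E l p < E l q) ∨
    (∀ q, p < q → q < l.length → E l q < E l p) := by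
  induction l with
  | nil => simp [MinMax]
  | cons a t ih =>
    unfold MinMax
    constructor
    · rintro ⟨hc, hm⟩ p hp
      match p with
      | 0 =>
        rcases hc with hc | hc
        · exact Or.inl (fun q hq hq' => by
            match q with
            | q+1 => exact hc _ (E_mem t q (by simpa using hq')))
        · exact Or.inr (fun q hq hq' => by
            match q with
            | q+1 => exact hc _ (E_mem t q (by simpa using hq')))
      | p+1 =>
        rcases (ih.1 hm) p (by simpa using hp) with h | h
        · exact Or.inl (fun q hq hq' => by
            match q with
            | q+1 => exact h q (by omega) (by simpa using hq'))
        · exact Or.inr (fun q hq hq' => by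
            match q with
            | q+1 => exact h q (by omega) (by simpa using hq'))
    · intro h
      constructor
      · rcases h 0 (by simp) with h0 | h0
        · refine Or.inl (fun x hx => ?_)
          obtain ⟨i, hi, he⟩ := exists_E_of_mem hx
          have := h0 (i+1) (by omega) (by simpa using Nat.succ_lt_succ hi)
          simpa [he] using this
        · refine Or.inr (fun x hx => ?_)
          obtain ⟨i, hi, he⟩ := exists_E_of_mem hx
          have := h0 (i+1) (by omega) (by simpa using Nat.succ_lt_succ hi)
          simpa [he] using this
      · refine ih.2 (fun p hp => ?_)
        rcases h (p+1) (by simpa using Nat.succ_lt_succ hp) with h0 | h0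
        · exact Or.inl (fun q hq hq' => by
            simpa using h0 (q+1) (by omega) (by simpa using Nat.succ_lt_succ hq'))
        · exact Or.inr (fun q hq hq' => by
            simpa using h0 (q+1) (by omega) (by simpa using Nat.succ_lt_succ hq'))

lemma minMax_cons_iff (a : ℕ) (t : List ℕ) :
    MinMax (a :: t) ↔ ((∀ x ∈ t, a < x) ∨ (∀ x ∈ t, x < a)) ∧ MinMax t := Iff.rfl

lemma E_append_left {M L : List ℕ} {i : ℕ} (h : i < M.length) : E (M ++ L) i = E M i := by
  rw [E, E, List.getD_eq_getElem _ _ h, List.getD_eq_getElem _ _ (by simp; omega),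
    List.getElem_append_left h]

lemma E_append_right {M L : List ℕ} {i : ℕ} (h : M.length ≤ i) (h2 : i - M.length < L.length) :
    E (M ++ L) i = E L (i - M.length) := by
  rw [E, E, List.getD_eq_getElem _ _ h2, List.getD_eq_getElem _ _ (by simp; omega)]
  exact List.getElem_append_right h

lemma sorted_E {L : List ℕ} (h : L.Pairwise (· < ·)) {p q : ℕ} (hpq : p < q)
    (hq : q < L.length) : E L p < E L q := by
  rw [E, E, List.getD_eq_getElem _ _ hq, List.getD_eq_getElem _ _ (hpq.trans hq)]
  exact List.pairwise_iff_getElem.1 h p q _ _ hpq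

lemma goodL_interior_of {a : ℕ} {M L : List ℕ} (hM : ∀ x ∈ M, a < x) (hL : ∀ x ∈ L, x < a)
    (hsort : L.Pairwise (· < ·)) (hmm : MinMax M) : GoodL (a :: (M ++ L)) := by
  have hspec := (minMax_iff M).1 hmm
  have hlen : (a :: (M ++ L)).length = 1 + M.length + L.length := by simp; omega
  constructor
  · rintro ⟨k, hk, j, hj, i, hi, h1, h2⟩
    rw [hlen] at hk
    match k, j with
    | k+1, j+1 =>
      rw [E_cons_succ] at h1 h2
      by_cases hkM : k < M.length
      · -- E l k in M
        have hjM : j < M.length := by omega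
        rw [E_append_left hkM] at h2
        rw [E_append_left hjM] at h1
        match i with
        | 0 =>
          rw [E_cons_zero] at h1
          exact absurd h1 (Nat.not_lt.2 (le_of_lt (hM _ (E_mem M j hjM))))
        | i+1 =>
          have hiM : i < M.length := by omega
          rw [E_cons_succ, E_append_left hiM] at h1 h2
          rcases hspec i hiM with hs | hs
          · exact absurd (hs j (by omega) hjM) (by omega)
          · exact absurd (hs k (by omega) hkM) (by omega)
      · -- E l k in L
        have hkL : k - M.length < L.length := by omega
        rw [E_append_right (by omega) hkL] at h2
        have hka : E L (k - M.length) < a := hL _ (E_mem L _ hkL)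
        match i with
        | 0 => rw [E_cons_zero] at h2; omega
        | i+1 =>
          rw [E_cons_succ] at h1 h2
          have hiL : ¬ i < M.length := by
            intro hc
            rw [E_append_left hc] at h2
            have := hM _ (E_mem M i hc); omega
          have hjL : ¬ j < M.length := by
            intro hc
            rw [E_append_left hc] at h1
            rw [E_append_right (by omega) (by omega)] at h2
            have := hM _ (E_mem M j hc)
            have := hL _ (E_mem L (i - M.length) (by omega))
            omega
          rw [E_append_right (by omega) (by omega)] at h1 h2
          rw [E_append_right (by omega) (by omega)] at h1
          have := sorted_E hsort (show i - M.length < j - M.length by omega)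
            (show j - M.length < L.length by omega)
          omega
  · rintro ⟨k, hk, i, hi, h0, hk1, h2, h3, h4⟩
    rw [hlen] at hk hk1
    match k with
    | k+1 =>
      rw [E_cons_succ] at h2 h3
      by_cases hkM : k < M.length
      · rw [E_append_left hkM] at h3
        match i with
        | 0 =>
          rw [E_cons_zero] at h3
          exact absurd h3 (Nat.not_lt.2 (le_of_lt (hM _ (E_mem M k hkM))))
        | i+1 =>
          have hiM : i < M.length := by omega
          have hi1M : i + 1 < M.length := by omega
          rw [E_cons_succ, E_append_left hiM] at h3 h4
          rw [E_cons_succ, E_append_left hi1M] at h4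
          rcases hspec i hiM with hs | hs
          · exact absurd (hs k (by omega) hkM) (by omega)
          · exact absurd (hs (i+1) (by omega) hi1M) (by omega)
      · -- descent inside L: impossible
        rw [E_cons_succ, E_append_right (by omega) (by omega)] at h2
        rw [E_append_right (by omega) (by omega)] at h2
        have := sorted_E hsort (show k - M.length < k + 1 - M.length by omega)
          (show k + 1 - M.length < L.length by omega)
        omega

lemma split_bigs_littles {a : ℕ} : ∀ {t : List ℕ}, (∀ x ∈ t, x ≠ a) →
    (∀ p q, p < q → q < t.length → E t p < a → E t q < a) →
    ∃ M L, t = M ++ L ∧ (∀ x ∈ M, a < x) ∧ (∀ x ∈ L, x < a)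
  | [], _, _ => ⟨[], [], by simp⟩
  | b :: r, hne, h => by
    by_cases hb : b < a
    · refine ⟨[], b :: r, by simp, by simp, ?_⟩
      intro x hx
      rcases List.mem_cons.1 hx with rfl | hx
      · exact hb
      · obtain ⟨i, hi, he⟩ := exists_E_of_mem hx
        have := h 0 (i+1) (by omega) (by simpa using Nat.succ_lt_succ hi)
          (by simpa using hb)
        rw [E_cons_succ, he] at this
        exact this
    · have hb' : a < b := lt_of_le_of_ne (Nat.not_lt.1 hb) (Ne.symm (hne b (by simp)))
      obtain ⟨M, L, ht, hM, hL⟩ := split_bigs_littles (t := r) (fun x hx => hne x (by simp [hx]))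
        (fun p q hpq hq hp => by
          have := h (p+1) (q+1) (by omega) (by simpa using Nat.succ_lt_succ hq)
            (by simpa using hp)
          simpa using this)
      refine ⟨b :: M, L, by simp [ht], ?_, hL⟩
      intro x hx
      rcases List.mem_cons.1 hx with rfl | hx
      · exact hb'
      · exact hM x hx

lemma E_ne_of_nodup {l : List ℕ} (h : l.Nodup) {p q : ℕ} (hpq : p ≠ q)
    (hp : p < l.length) (hq : q < l.length) : E l p ≠ E l q := by
  rw [E, E, List.getD_eq_getElem _ _ hp, List.getD_eq_getElem _ _ hq]
  intro hc
  exact hpq ((List.Nodup.getElem_inj_iff h).1 hc)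

lemma goodL_interior_decomp {a : ℕ} {t : List ℕ} (hnd : (a :: t).Nodup)
    (hgood : GoodL (a :: t)) (hbig : ∃ x ∈ t, a < x) (hlit : ∃ x ∈ t, x < a) :
    ∃ M L, t = M ++ L ∧ (∀ x ∈ M, a < x) ∧ (∀ x ∈ L, x < a) ∧
      L.Pairwise (· < ·) ∧ MinMax M := by
  have htnd : t.Nodup := hnd.of_cons
  have hane : ∀ x ∈ t, x ≠ a := fun x hx hc => (List.nodup_cons.1 hnd).1 (hc ▸ hx)
  -- Step 1: split
  obtain ⟨M, L, rfl, hM, hL⟩ := split_bigs_littles hane (by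
    intro p q hpq hq hp
    by_contra hc
    push_neg at hc
    have hc' : a < E t q := lt_of_le_of_ne hc (hane _ (E_mem t q hq)).symm
    exact hgood.1 ⟨q+1, by simpa using Nat.succ_lt_succ hq, p+1, by omega, 0, by omega,
      by simpa using hp, by simpa using hc'⟩)
  have hMne : M ≠ [] := by
    rintro rfl
    obtain ⟨x, hx, hx2⟩ := hbig
    simp only [List.nil_append] at hx
    exact absurd (hL x hx) (by omega)
  have hLne : L ≠ [] := by
    rintro rfl
    obtain ⟨x, hx, hx2⟩ := hlit
    simp only [List.append_nil] at hx
    exact absurd (hM x hx) (by omega)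
  have hMpos : 0 < M.length := List.length_pos_iff.2 hMne
  have hLpos : 0 < L.length := List.length_pos_iff.2 hLne
  have hlen : (a :: (M ++ L)).length = 1 + M.length + L.length := by simp; omega
  have hMnd : M.Nodup := (List.nodup_append.1 htnd).1
  have hLnd : L.Nodup := (List.nodup_append.1 htnd).2.1
  -- Step 2: L sorted
  have hsort : L.Pairwise (· < ·) := by
    rw [← List.isChain_iff_pairwise]
    rw [List.isChain_iff_getElem]
    intro i hi
    have hi1 : i + 1 < L.length := by omega
    show L.get ⟨i, by omega⟩ < L.get ⟨i+1, hi1⟩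
    have hEget : ∀ j (hj : j < L.length), L.get ⟨j, hj⟩ = E L j := by
      intro j hj
      rw [E, List.getD_eq_getElem _ _ hj]; rfl
    rw [hEget i (by omega), hEget (i+1) hi1]
    rcases Nat.lt_trichotomy (E L i) (E L (i+1)) with h | h | h
    · exact h
    · exact absurd h (E_ne_of_nodup hLnd (by omega) (by omega) hi1)
    · exfalso
      refine hgood.2 ⟨M.length + i + 1, ?_, 0, by omega, by omega, ?_, ?_, ?_, ?_⟩
      · rw [hlen]; omega
      · rw [hlen]; omega
      · show E (a :: (M ++ L)) (M.length + i + 1 + 1) < E (a :: (M ++ L)) (M.length + i + 1)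
        have e1 : E (a :: (M ++ L)) (M.length + i + 1) = E L i := by
          rw [show M.length + i + 1 = (M.length + i) + 1 by rfl, E_cons_succ,
            E_append_right (by omega) (by omega)]
          congr 1; omega
        have e2 : E (a :: (M ++ L)) (M.length + i + 1 + 1) = E L (i+1) := by
          rw [show M.length + i + 1 + 1 = (M.length + i + 1) + 1 by rfl, E_cons_succ,
            E_append_right (by omega) (by omega)]
          congr 1; omega
        rw [e1, e2]; exact h
      · show E (a :: (M ++ L)) (M.length + i + 1) < E (a :: (M ++ L)) 0
        rw [E_cons_zero, show M.length + i + 1 = (M.length + i) + 1 by rfl, E_cons_succ,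
          E_append_right (by omega) (by omega)]
        refine hL _ (E_mem L _ ?_)
        omega
      · show E (a :: (M ++ L)) 0 < E (a :: (M ++ L)) 1
        rw [E_cons_zero, show (1:ℕ) = 0 + 1 by rfl, E_cons_succ, E_append_left hMpos]
        exact hM _ (E_mem M 0 hMpos)
  -- Step 3: MinMax M
  have hmm : MinMax M := by
    rw [minMax_iff]
    intro p hp
    by_contra hc
    push_neg at hc
    obtain ⟨⟨q1, hpq1, hq1, hv1⟩, ⟨q2, hpq2, hq2, hv2⟩⟩ := hc
    have hv1' : E M q1 < E M p :=
      lt_of_le_of_ne hv1 (E_ne_of_nodup hMnd (by omega) hq1 hp)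
    have hv2' : E M p < E M q2 :=
      lt_of_le_of_ne hv2 (E_ne_of_nodup hMnd (by omega) hp hq2)
    -- claim: no little-before-big after p
    have claim : ∀ u v, p < u → u < v → v < M.length → E M u < E M p → ¬ E M p < E M v := by
      intro u v hpu huv hv h1 h2
      refine hgood.1 ⟨v+1, ?_, u+1, by omega, p+1, by omega, ?_, ?_⟩
      · rw [hlen]; omega
      · rw [E_cons_succ, E_cons_succ, E_append_left (by omega), E_append_left (by omega)]
        exact h1
      · rw [E_cons_succ, E_cons_succ, E_append_left (by omega), E_append_left (by omega)]
        exact h2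
    have hq21 : q2 < q1 := by
      rcases Nat.lt_trichotomy q1 q2 with h | h | h
      · exact absurd hv2' (claim q1 q2 hpq1 h hq2 hv1')
      · exfalso; rw [h] at hv1'; omega
      · exact h
    -- M (p+1) > M p
    have hp1 : p + 1 < M.length := by omega
    have hasc : E M p < E M (p+1) := by
      rcases Nat.lt_trichotomy (E M (p+1)) (E M p) with h | h | h
      · exfalso
        have hne : p + 1 ≠ q2 := by
          intro hc; rw [hc] at h; omega
        have hlt : p + 1 < q2 := by omega
        exact absurd hv2' (claim (p+1) q2 (by omega) hlt hq2 h)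
      · exact absurd h (E_ne_of_nodup hMnd (by omega) hp1 hp)
      · exact h
    -- M last < M p
    have hlast : E M (M.length - 1) < E M p := by
      rcases Nat.lt_trichotomy (E M (M.length - 1)) (E M p) with h | h | h
      · exact h
      · exact absurd h (E_ne_of_nodup hMnd (by omega) (by omega) hp)
      · exfalso
        have hne : q1 ≠ M.length - 1 := by
          intro hc; rw [hc] at hv1'; omega
        exact absurd h (claim q1 (M.length - 1) hpq1 (by omega) (by omega) hv1')
    -- build 3421
    obtain ⟨q, hq⟩ : ∃ q, M.length = q + 1 := ⟨M.length - 1, by omega⟩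
    have hlast' : E M q < E M p := by
      have := hlast; rwa [show M.length - 1 = q by omega] at this
    refine hgood.2 ⟨q+1, ?_, p+1, by omega, by omega, ?_, ?_, ?_, ?_⟩
    · rw [hlen]; omega
    · rw [hlen]; omega
    · show E (a :: (M ++ L)) (q+1+1) < E (a :: (M ++ L)) (q+1)
      rw [E_cons_succ, E_cons_succ, E_append_right (by omega) (by omega),
        E_append_left (by omega), show q + 1 - M.length = 0 by omega]
      have h1 : E L 0 < a := hL _ (E_mem L 0 hLpos)
      have h2 : a < E M q := hM _ (E_mem M q (by omega))
      omega
    · show E (a :: (M ++ L)) (q+1) < E (a :: (M ++ L)) (p+1)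
      rw [E_cons_succ, E_cons_succ, E_append_left (by omega), E_append_left hp]
      exact hlast'
    · show E (a :: (M ++ L)) (p+1) < E (a :: (M ++ L)) (p+1+1)
      rw [E_cons_succ, E_cons_succ, E_append_left hp, E_append_left hp1]
      exact hasc
  exact ⟨M, L, rfl, hM, hL, hsort, hmm⟩

/-! ### Permutations of a finset as lists -/

noncomputable def permsF (s : Finset ℕ) : Finset (List ℕ) := s.toList.permutations.toFinset

lemma mem_permsF {s : Finset ℕ} {l : List ℕ} : l ∈ permsF s ↔ l.Perm s.toList := by
  rw [permsF, List.mem_toFinset, List.mem_permutations]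

lemma toList_erase_perm {s : Finset ℕ} {a : ℕ} (ha : a ∈ s) :
    s.toList.Perm (a :: (s.erase a).toList) := by
  rw [← Multiset.coe_eq_coe]
  show (↑s.toList : Multiset ℕ) = ↑(a :: (s.erase a).toList)
  rw [← Multiset.cons_coe, Finset.coe_toList, Finset.coe_toList, Finset.erase_val]
  exact (Multiset.cons_erase ha).symm

lemma permsF_length {s : Finset ℕ} {l : List ℕ} (h : l ∈ permsF s) : l.length = s.card := by
  rw [(mem_permsF.1 h).length_eq, Finset.length_toList]

lemma permsF_nodup {s : Finset ℕ} {l : List ℕ} (h : l ∈ permsF s) : l.Nodup :=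
  (mem_permsF.1 h).nodup_iff.2 s.nodup_toList

lemma permsF_mem_iff {s : Finset ℕ} {l : List ℕ} (h : l ∈ permsF s) {x : ℕ} :
    x ∈ l ↔ x ∈ s := by
  rw [(mem_permsF.1 h).mem_iff, Finset.mem_toList]

lemma permsF_singleton (a : ℕ) : permsF {a} = {[a]} := by
  ext l
  rw [mem_permsF, Finset.toList_singleton, List.perm_singleton, Finset.mem_singleton]

lemma mem_permsF_cons {s : Finset ℕ} {a : ℕ} (ha : a ∈ s) {t : List ℕ} :
    (a :: t) ∈ permsF s ↔ t ∈ permsF (s.erase a) := by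
  rw [mem_permsF, mem_permsF]
  constructor
  · intro h
    exact ((h.trans (toList_erase_perm ha)).cons_inv)
  · intro h
    exact (List.Perm.cons a h).trans (toList_erase_perm ha).symm

/-- Decomposition of a filtered count over permutations by first element. -/
lemma card_permsF_filter (s : Finset ℕ) (hs : s.Nonempty) (P : List ℕ → Prop)
    [DecidablePred P] :
    ((permsF s).filter P).card
      = ∑ a ∈ s, ((permsF (s.erase a)).filter (fun t => P (a :: t))).card := by
  have hcard : 0 < s.card := Finset.card_pos.2 hs
  have hne : ∀ l ∈ (permsF s).filter P, l ≠ [] := by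
    intro l hl hc
    have := permsF_length (Finset.mem_filter.1 hl).1
    rw [hc] at this
    simp at this
    omega
  rw [Finset.card_eq_sum_card_fiberwise (f := List.headI) (t := s) ?hmem]
  case hmem =>
    intro l hl
    have hlne := hne l hl
    have hmem := permsF_mem_iff (Finset.mem_filter.1 hl).1 (x := l.headI)
    cases l with
    | nil => exact absurd rfl hlne
    | cons b t => exact hmem.1 (List.mem_cons_self (a := b) (l := t))
  refine Finset.sum_congr rfl (fun a ha => ?_)
  refine Finset.card_bij (fun l _ => l.tail) ?_ ?_ ?_
  · intro l hl
    simp only [Finset.mem_filter] at hl ⊢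
    obtain ⟨⟨hlp, hP⟩, hhead⟩ := hl
    cases l with
    | nil =>
      exact absurd (permsF_length hlp) (by simp; omega)
    | cons b t =>
      have hb : b = a := hhead
      subst hb
      exact ⟨(mem_permsF_cons ha).1 hlp, hP⟩
  · intro l1 h1 l2 h2 he
    simp only [Finset.mem_filter] at h1 h2
    cases l1 with
    | nil => exact absurd (permsF_length h1.1.1) (by simp; omega)
    | cons b1 t1 =>
      cases l2 with
      | nil => exact absurd (permsF_length h2.1.1) (by simp; omega)
      | cons b2 t2 =>
        have hb1 : b1 = a := h1.2
        have hb2 : b2 = a := h2.2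
        simp only [List.tail_cons] at he
        rw [hb1, hb2, he]
  · intro t ht
    simp only [Finset.mem_filter] at ht
    exact ⟨a :: t, Finset.mem_filter.2 ⟨Finset.mem_filter.2
      ⟨(mem_permsF_cons ha).2 ht.1, ht.2⟩, rfl⟩, rfl⟩

lemma minMax_singleton (a : ℕ) : MinMax [a] := by
  refine ⟨Or.inl (by simp), trivial⟩

lemma card_minmax : ∀ (n : ℕ) (s : Finset ℕ), s.card = n → 1 ≤ n →
    ((permsF s).filter MinMax).card = 2 ^ (n - 1) := by
  intro n
  induction n using Nat.strong_induction_on with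
  | _ n ih =>
    intro s hcard hn
    rcases eq_or_lt_of_le hn with h1 | h2
    · -- n = 1
      obtain ⟨a, rfl⟩ := Finset.card_eq_one.1 (hcard.trans h1.symm)
      rw [permsF_singleton, Finset.filter_singleton, if_pos (minMax_singleton a)]
      rw [← h1]
      simp
    · -- n ≥ 2
      have hne : s.Nonempty := Finset.card_pos.1 (by omega)
      have hlt : 1 < s.card := by omega
      have hminmem := s.min'_mem hne
      have hmaxmem := s.max'_mem hne
      have hmm : s.min' hne ≠ s.max' hne := ne_of_lt (s.min'_lt_max'_of_card hlt)
      rw [card_permsF_filter s hne MinMax]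
      have hterm : ∀ a ∈ s, ((permsF (s.erase a)).filter (fun t => MinMax (a :: t))).card
          = (if a = s.min' hne then 2^(n-2) else 0) + (if a = s.max' hne then 2^(n-2) else 0) := by
        intro a ha
        have hec : (s.erase a).card = n - 1 := by rw [Finset.card_erase_of_mem ha, hcard]
        by_cases hamin : a = s.min' hne
        · rw [if_pos hamin, if_neg (hamin ▸ hmm), Nat.add_zero]
          have : ∀ t ∈ permsF (s.erase a), MinMax (a :: t) ↔ MinMax t := by
            intro t ht
            rw [minMax_cons_iff]
            constructor
            · exact fun h => h.2
            · intro h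
              refine ⟨Or.inl (fun x hx => ?_), h⟩
              have hxs := (permsF_mem_iff ht).1 hx
              have := Finset.mem_erase.1 hxs
              exact lt_of_le_of_ne (hamin ▸ s.min'_le x this.2) (Ne.symm (hamin ▸ this.1))
          rw [Finset.filter_congr this]
          exact ih (n-1) (by omega) _ hec (by omega)
        · by_cases hamax : a = s.max' hne
          · rw [if_neg hamin, if_pos hamax, Nat.zero_add]
            have : ∀ t ∈ permsF (s.erase a), MinMax (a :: t) ↔ MinMax t := by
              intro t ht
              rw [minMax_cons_iff]
              constructor
              · exact fun h => h.2
              · intro h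
                refine ⟨Or.inr (fun x hx => ?_), h⟩
                have hxs := (permsF_mem_iff ht).1 hx
                have := Finset.mem_erase.1 hxs
                exact lt_of_le_of_ne (hamax ▸ s.le_max' x this.2) (hamax ▸ this.1)
            rw [Finset.filter_congr this]
            exact ih (n-1) (by omega) _ hec (by omega)
          · rw [if_neg hamin, if_neg hamax]
            have hminlt : s.min' hne < a :=
              lt_of_le_of_ne (s.min'_le a ha) (Ne.symm hamin)
            have hmaxgt : a < s.max' hne :=
              lt_of_le_of_ne (s.le_max' a ha) hamax
            rw [Finset.filter_false_of_mem, Finset.card_empty]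
            intro t ht
            rw [minMax_cons_iff]
            rintro ⟨hc | hc, -⟩
            · have : s.min' hne ∈ t := (permsF_mem_iff ht).2
                (Finset.mem_erase.2 ⟨fun hc2 => hamin hc2.symm, hminmem⟩)
              exact absurd (hc _ this) (by omega)
            · have : s.max' hne ∈ t := (permsF_mem_iff ht).2
                (Finset.mem_erase.2 ⟨fun hc2 => hamax hc2.symm, hmaxmem⟩)
              exact absurd (hc _ this) (by omega)
      rw [Finset.sum_congr rfl hterm, Finset.sum_add_distrib,
        Finset.sum_ite_eq' s (s.min' hne) (fun _ => 2^(n-2)),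
        Finset.sum_ite_eq' s (s.max' hne) (fun _ => 2^(n-2)),
        if_pos hminmem, if_pos hmaxmem]
      have : n - 1 = (n - 2) + 1 := by omega
      rw [this, pow_succ]
      ring

lemma goodL_singleton (a : ℕ) : GoodL [a] := by
  constructor
  · rintro ⟨k, hk, j, hj, i, hi, -⟩
    simp at hk
    omega
  · rintro ⟨k, hk, i, hi, h0, -⟩
    simp at hk
    omega

lemma toList_filter_perm (s : Finset ℕ) (p : ℕ → Prop) [DecidablePred p] :
    ((s.filter p).toList).Perm (s.toList.filter (fun x => decide (p x))) := by
  rw [← Multiset.coe_eq_coe, Finset.coe_toList, ← Multiset.filter_coe,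
    Finset.coe_toList, Finset.filter_val]

lemma toList_union_perm (B L : Finset ℕ) (h : Disjoint B L) :
    ((B ∪ L).toList).Perm (B.toList ++ L.toList) := by
  rw [← Multiset.coe_eq_coe, Finset.coe_toList, ← Multiset.coe_add,
    Finset.coe_toList, Finset.coe_toList, ← Finset.disjUnion_eq_union B L h]
  rfl

lemma geomSumTwo (m : ℕ) : ∑ i ∈ Finset.range m, 2 ^ i = 2 ^ m - 1 := by
  induction m with
  | zero => simp
  | succ m ih =>
    rw [Finset.sum_range_succ, ih, pow_succ]
    have := Nat.one_le_two_pow (n := m)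
    omega

lemma card_interior (s : Finset ℕ) (a : ℕ) (ha : a ∈ s)
    (hmin : ∃ x ∈ s, x < a) (hmax : ∃ x ∈ s, a < x) :
    ((permsF (s.erase a)).filter (fun t => GoodL (a :: t))).card
      = 2 ^ ((s.filter (a < ·)).card - 1) := by
  set B : Finset ℕ := (s.erase a).filter (a < ·) with hB
  set Lt : Finset ℕ := (s.erase a).filter (· < a) with hLt
  set Ls : List ℕ := Lt.sort (· ≤ ·) with hLs
  have hBeq : B = s.filter (a < ·) := by
    ext x
    simp only [hB, Finset.mem_filter, Finset.mem_erase]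
    constructor
    · rintro ⟨⟨-, h1⟩, h2⟩; exact ⟨h1, h2⟩
    · rintro ⟨h1, h2⟩; exact ⟨⟨by omega, h1⟩, h2⟩
  have hBne : B.Nonempty := by
    obtain ⟨x, hx, hx2⟩ := hmax
    exact ⟨x, by simp [hB, Finset.mem_erase, hx, hx2]; omega⟩
  have hdisj : Disjoint B Lt := by
    rw [Finset.disjoint_left]
    intro x hx hx2
    simp only [hB, hLt, Finset.mem_filter] at hx hx2
    omega
  have hunion : B ∪ Lt = s.erase a := by
    ext x
    simp only [hB, hLt, Finset.mem_union, Finset.mem_filter, Finset.mem_erase]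
    constructor
    · rintro (⟨h, -⟩ | ⟨h, -⟩) <;> exact h
    · intro h
      rcases Nat.lt_trichotomy a x with h2 | h2 | h2
      · exact Or.inl ⟨h, h2⟩
      · exact absurd h2.symm h.1
      · exact Or.inr ⟨h, h2⟩
  have hLs_mem : ∀ x, x ∈ Ls ↔ x ∈ Lt := fun x => Finset.mem_sort _
  have hLs_sorted : Ls.Pairwise (· < ·) := List.sortedLT_iff_pairwise.1 (Finset.sortedLT_sort Lt)
  have hLs_perm : Ls.Perm Lt.toList := Finset.sort_perm_toList (r := (· ≤ ·)) Lt
  have herase_perm : (s.erase a).toList.Perm (B.toList ++ Lt.toList) := by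
    rw [← hunion]
    exact toList_union_perm B Lt hdisj
  rw [← hBeq]
  rw [← card_minmax B.card B rfl (Finset.card_pos.2 hBne)]
  refine (Finset.card_bij (fun M _ => M ++ Ls) ?_ ?_ ?_).symm
  · intro M hM
    simp only [Finset.mem_filter] at hM ⊢
    obtain ⟨hMp, hMmm⟩ := hM
    constructor
    · rw [mem_permsF]
      exact ((mem_permsF.1 hMp).append hLs_perm).trans herase_perm.symm
    · exact goodL_interior_of
        (fun x hx => (Finset.mem_filter.1 ((permsF_mem_iff hMp).1 hx)).2)
        (fun x hx => (Finset.mem_filter.1 ((hLs_mem x).1 hx)).2)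
        hLs_sorted hMmm
  · intro M1 h1 M2 h2 he
    exact List.append_cancel_right he
  · intro t ht
    simp only [Finset.mem_filter] at ht
    obtain ⟨htp, htg⟩ := ht
    have hant : a ∉ t := fun hc => by
      have := (permsF_mem_iff htp).1 hc
      simp at this
    have hnd : (a :: t).Nodup := List.nodup_cons.2 ⟨hant, permsF_nodup htp⟩
    have hbig : ∃ x ∈ t, a < x := by
      obtain ⟨x, hx, hx2⟩ := hmax
      exact ⟨x, (permsF_mem_iff htp).2 (Finset.mem_erase.2 ⟨by omega, hx⟩), hx2⟩
    have hlit : ∃ x ∈ t, x < a := by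
      obtain ⟨x, hx, hx2⟩ := hmin
      exact ⟨x, (permsF_mem_iff htp).2 (Finset.mem_erase.2 ⟨by omega, hx⟩), hx2⟩
    obtain ⟨M, L, rfl, hM, hL, hsort, hmm⟩ := goodL_interior_decomp hnd htg hbig hlit
    have hMperm : M.Perm B.toList := by
      have h1 : (M ++ L).filter (fun x => decide (a < x)) = M := by
        rw [List.filter_append, List.filter_eq_self.2 (fun x hx => by
          simpa using hM x hx), List.filter_eq_nil_iff.2 (fun x hx => by
          simp only [decide_eq_true_eq]
          have := hL x hx; omega), List.append_nil]
      have h2 := (mem_permsF.1 htp).filter (fun x => decide (a < x))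
      rw [h1] at h2
      exact h2.trans (toList_filter_perm (s.erase a) (a < ·)).symm
    have hLeq : L = Ls := by
      have h1 : (M ++ L).filter (fun x => decide (x < a)) = L := by
        rw [List.filter_append, List.filter_eq_nil_iff.2 (fun x hx => by
          simp only [decide_eq_true_eq]
          have := hM x hx; omega), List.filter_eq_self.2 (fun x hx => by
          simpa using hL x hx), List.nil_append]
      have h2 := (mem_permsF.1 htp).filter (fun x => decide (x < a))
      rw [h1] at h2
      have h3 : L.Perm Ls :=
        (h2.trans (toList_filter_perm (s.erase a) (· < a)).symm).trans hLs_perm.symm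
      exact List.Perm.eq_of_pairwise'
        (hsort.imp (fun h => le_of_lt h)) (Finset.pairwise_sort _ _) h3
    refine ⟨M, Finset.mem_filter.2 ⟨mem_permsF.2 hMperm, hmm⟩, by rw [hLeq]⟩

lemma card_good : ∀ (n : ℕ) (s : Finset ℕ), s.card = n → 1 ≤ n →
    ((permsF s).filter GoodL).card = (n - 1) * 2 ^ (n - 2) + 1 := by
  intro n
  induction n using Nat.strong_induction_on with
  | _ n ih =>
    intro s hcard hn
    rcases eq_or_lt_of_le hn with h1 | h2
    · obtain ⟨a, rfl⟩ := Finset.card_eq_one.1 (hcard.trans h1.symm)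
      rw [permsF_singleton, Finset.filter_singleton, if_pos (goodL_singleton a)]
      rw [← h1]
      simp
    · have hne : s.Nonempty := Finset.card_pos.1 (by omega)
      have hlt : 1 < s.card := by omega
      set mn := s.min' hne with hmn
      set mx := s.max' hne with hmx
      have hminmem : mn ∈ s := s.min'_mem hne
      have hmaxmem : mx ∈ s := s.max'_mem hne
      have hmm : mn ≠ mx := ne_of_lt (s.min'_lt_max'_of_card hlt)
      rw [card_permsF_filter s hne GoodL]
      have hterm : ∀ a ∈ s, ((permsF (s.erase a)).filter (fun t => GoodL (a :: t))).card
          = if a = mn then (n-2) * 2^(n-3) + 1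
            else if a = mx then (n-2) * 2^(n-3) + 1
            else 2 ^ ((s.filter (a < ·)).card - 1) := by
        intro a ha
        have hec : (s.erase a).card = n - 1 := by rw [Finset.card_erase_of_mem ha, hcard]
        by_cases hamin : a = mn
        · rw [if_pos hamin]
          have hcong : ∀ t ∈ permsF (s.erase a), GoodL (a :: t) ↔ GoodL t := by
            intro t ht
            refine goodL_cons_min (fun x hx => ?_)
            have := Finset.mem_erase.1 ((permsF_mem_iff ht).1 hx)
            exact lt_of_le_of_ne (hamin ▸ s.min'_le x this.2) (Ne.symm (hamin ▸ this.1))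
          rw [Finset.filter_congr hcong]
          have := ih (n-1) (by omega) _ hec (by omega)
          rw [this, show n-1-1 = n-2 by omega, show n-1-2 = n-3 by omega]
        · by_cases hamax : a = mx
          · rw [if_neg hamin, if_pos hamax]
            have hcong : ∀ t ∈ permsF (s.erase a), GoodL (a :: t) ↔ GoodL t := by
              intro t ht
              refine goodL_cons_max (fun x hx => ?_)
              have := Finset.mem_erase.1 ((permsF_mem_iff ht).1 hx)
              exact lt_of_le_of_ne (hamax ▸ s.le_max' x this.2) (hamax ▸ this.1)
            rw [Finset.filter_congr hcong]
            have := ih (n-1) (by omega) _ hec (by omega)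
            rw [this, show n-1-1 = n-2 by omega, show n-1-2 = n-3 by omega]
          · rw [if_neg hamin, if_neg hamax]
            refine card_interior s a ha ⟨mn, hminmem, ?_⟩ ⟨mx, hmaxmem, ?_⟩
            · exact lt_of_le_of_ne (s.min'_le a ha) (Ne.symm hamin)
            · exact lt_of_le_of_ne (s.le_max' a ha) hamax
      rw [Finset.sum_congr rfl hterm]
      -- split off min and max
      rw [← Finset.add_sum_erase s _ hminmem, if_pos rfl]
      have hmxmem' : mx ∈ s.erase mn := Finset.mem_erase.2 ⟨Ne.symm hmm, hmaxmem⟩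
      rw [← Finset.add_sum_erase (s.erase mn) _ hmxmem', if_neg (Ne.symm hmm), if_pos rfl]
      set s'' := (s.erase mn).erase mx with hs''
      have hs''card : s''.card = n - 2 := by
        rw [hs'', Finset.card_erase_of_mem hmxmem', Finset.card_erase_of_mem hminmem, hcard]
        omega
      have hsum : ∑ a ∈ s'', (if a = mn then (n-2) * 2^(n-3) + 1
            else if a = mx then (n-2) * 2^(n-3) + 1
            else 2 ^ ((s.filter (a < ·)).card - 1)) = 2^(n-2) - 1 := by
        have hmem'' : ∀ a ∈ s'', a ∈ s ∧ a ≠ mn ∧ a ≠ mx := by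
          intro a ha
          simp only [hs'', Finset.mem_erase] at ha
          exact ⟨ha.2.2, ha.2.1, ha.1⟩
        rw [Finset.sum_congr rfl (fun a ha => by
          rw [if_neg (hmem'' a ha).2.1, if_neg (hmem'' a ha).2.2])]
        -- the statistic bc a := (s.filter (a < ·)).card
        set bc : ℕ → ℕ := fun a => (s.filter (a < ·)).card with hbc
        have hbc_mono : ∀ x ∈ s, ∀ y ∈ s, x < y → bc y < bc x := by
          intro x hx y hy hxy
          refine Finset.card_lt_card ((Finset.ssubset_iff_of_subset ?_).2 ⟨y, ?_, ?_⟩)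
          · intro z hz
            simp only [Finset.mem_filter] at hz ⊢
            exact ⟨hz.1, by omega⟩
          · exact Finset.mem_filter.2 ⟨hy, hxy⟩
          · simp
        have hinj : Set.InjOn bc s'' := by
          intro x hx y hy hxy
          by_contra hne2
          rcases Nat.lt_trichotomy x y with h | h | h
          · have := hbc_mono x (hmem'' x hx).1 y (hmem'' y hy).1 h; omega
          · exact hne2 h
          · have := hbc_mono y (hmem'' y hy).1 x (hmem'' x hx).1 h; omega
        have himage : s''.image bc = Finset.Ico 1 (n-1) := by
          apply Finset.eq_of_subset_of_card_le
          · intro j hj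
            obtain ⟨a, ha, rfl⟩ := Finset.mem_image.1 hj
            obtain ⟨has, hamn, hamx⟩ := hmem'' a ha
            have h1 : 1 ≤ bc a := by
              refine Finset.card_pos.2 ⟨mx, Finset.mem_filter.2 ⟨hmaxmem, ?_⟩⟩
              exact lt_of_le_of_ne (s.le_max' a has) hamx
            have h2 : bc a < n - 1 := by
              have hmna : mn < a := lt_of_le_of_ne (s.min'_le a has) (Ne.symm hamn)
              have hsub : s.filter (a < ·) ⊆ (s.erase mn).erase a := by
                intro z hz
                simp only [Finset.mem_filter] at hz
                exact Finset.mem_erase.2 ⟨by omega, Finset.mem_erase.2 ⟨by omega, hz.1⟩⟩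
              have hmem1 : a ∈ s.erase mn := Finset.mem_erase.2 ⟨by omega, has⟩
              have hle := Finset.card_le_card hsub
              rw [Finset.card_erase_of_mem hmem1, Finset.card_erase_of_mem hminmem,
                hcard] at hle
              have hbceq : bc a = (Finset.filter (fun x => a < x) s).card := rfl
              omega
            exact Finset.mem_Ico.2 ⟨h1, h2⟩
          · rw [Nat.card_Ico, Finset.card_image_of_injOn hinj, hs''card]
            omega
        rw [← Finset.sum_image (g := bc) (f := fun j => 2^(j-1)) (fun x hx y hy => hinj hx hy),
          himage, Finset.sum_Ico_eq_sum_range]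
        have : ∀ i ∈ Finset.range (n - 1 - 1), 2 ^ (1 + i - 1) = 2 ^ i := by
          intro i _
          congr 1
          omega
        rw [Finset.sum_congr rfl this]
        have : n - 1 - 1 = n - 2 := by omega
        rw [this, geomSumTwo]
      rw [hsum]
      -- final arithmetic
      have h2p : 1 ≤ 2^(n-2) := Nat.one_le_two_pow
      rcases Nat.lt_or_ge n 3 with h3 | h3
      · interval_cases n
        · simp
      · obtain ⟨m, rfl⟩ : ∃ m, n = m + 3 := ⟨n - 3, by omega⟩
        simp only [show m + 3 - 1 = m + 2 by omega, show m + 3 - 2 = m + 1 by omega,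
          show m + 3 - 3 = m by omega]
        rw [pow_succ]
        have h2m : 1 ≤ 2^m := Nat.one_le_two_pow
        have e : (m+2)*(2^m*2) = 2*((m+1)*2^m) + 2^m*2 := by ring
        omega

/-! ### Bridge to `Equiv.Perm (Fin n)` -/

/-- `π` contains the classical pattern 2-1-3: indices `i < j < k` with `π j < π i < π k`. -/
def Contains213 {n : ℕ} (π : Equiv.Perm (Fin n)) : Prop :=
  ∃ i j k : Fin n, i < j ∧ j < k ∧ π j < π i ∧ π i < π k

/-- `π` contains the generalized pattern 34-21 (both pairs adjacent). -/
def Contains34'21 {n : ℕ} (π : Equiv.Perm (Fin n)) : Prop :=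
  ∃ i i' k k' : Fin n, (i' : ℕ) = (i : ℕ) + 1 ∧ (k' : ℕ) = (k : ℕ) + 1 ∧ i' < k ∧
    π k' < π k ∧ π k < π i ∧ π i < π i'

def wordOf {n : ℕ} (π : Equiv.Perm (Fin n)) : List ℕ := List.ofFn (fun i => (π i : ℕ))

lemma wordOf_length {n : ℕ} (π : Equiv.Perm (Fin n)) : (wordOf π).length = n := by
  simp [wordOf]

lemma E_wordOf {n : ℕ} (π : Equiv.Perm (Fin n)) {i : ℕ} (h : i < n) :
    E (wordOf π) i = (π ⟨i, h⟩ : ℕ) := by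
  rw [E, List.getD_eq_getElem _ _ (by simpa [wordOf_length] using h)]
  simp [wordOf]

lemma contains213_iff {n : ℕ} (π : Equiv.Perm (Fin n)) :
    Contains213 π ↔ Has213 (wordOf π) := by
  constructor
  · rintro ⟨i, j, k, hij, hjk, h1, h2⟩
    refine ⟨k, by simp [wordOf_length], j, hjk, i, hij, ?_, ?_⟩
    · rw [E_wordOf π j.isLt, E_wordOf π i.isLt]
      simp only [Fin.eta]
      exact h1
    · rw [E_wordOf π i.isLt, E_wordOf π k.isLt]
      simp only [Fin.eta]
      exact h2
  · rintro ⟨k, hk, j, hj, i, hi, h1, h2⟩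
    rw [wordOf_length] at hk
    have hjn : j < n := by omega
    have hin : i < n := by omega
    rw [E_wordOf π hjn, E_wordOf π hin] at h1
    rw [E_wordOf π hin, E_wordOf π hk] at h2
    exact ⟨⟨i, hin⟩, ⟨j, hjn⟩, ⟨k, hk⟩, hi, hj, h1, h2⟩

lemma contains3421_iff {n : ℕ} (π : Equiv.Perm (Fin n)) :
    Contains34'21 π ↔ Has3421 (wordOf π) := by
  constructor
  · rintro ⟨i, i', k, k', hi', hk', hik, h1, h2, h3⟩
    have hkn : (k : ℕ) < n := k.isLt
    have hk1 : (k : ℕ) + 1 < n := by rw [← hk']; exact k'.isLt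
    have hi1 : (i : ℕ) + 1 < n := by
      have : (i' : ℕ) < (k : ℕ) := hik
      omega
    refine ⟨k, by simpa [wordOf_length] using hkn, i, ?_, ?_,
      by simpa [wordOf_length], ?_, ?_, ?_⟩
    · have : (i' : ℕ) < (k : ℕ) := hik
      omega
    · have : (i' : ℕ) < (k : ℕ) := hik
      omega
    · rw [E_wordOf π hk1, E_wordOf π hkn]
      have hkk : (⟨(k : ℕ) + 1, hk1⟩ : Fin n) = k' := by
        apply Fin.ext; simp [hk']
      rw [hkk]
      have hke : (⟨(k : ℕ), hkn⟩ : Fin n) = k := by apply Fin.ext; rfl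
      rw [hke]
      exact h1
    · rw [E_wordOf π hkn, E_wordOf π i.isLt]
      have hke : (⟨(k : ℕ), hkn⟩ : Fin n) = k := by apply Fin.ext; rfl
      have hie : (⟨(i : ℕ), i.isLt⟩ : Fin n) = i := by apply Fin.ext; rfl
      rw [hke, hie]
      exact h2
    · rw [E_wordOf π i.isLt, E_wordOf π hi1]
      have hie : (⟨(i : ℕ), i.isLt⟩ : Fin n) = i := by apply Fin.ext; rfl
      have hi'e : (⟨(i : ℕ) + 1, hi1⟩ : Fin n) = i' := by apply Fin.ext; simp [hi']
      rw [hie, hi'e]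
      exact h3
  · rintro ⟨k, hk, i, hi, h0, h1, h2, h3, h4⟩
    rw [wordOf_length] at hk h1
    have hin : i < n := by omega
    have hi1 : i + 1 < n := by omega
    rw [E_wordOf π h1, E_wordOf π hk] at h2
    rw [E_wordOf π hk, E_wordOf π hin] at h3
    rw [E_wordOf π hin, E_wordOf π hi1] at h4
    exact ⟨⟨i, hin⟩, ⟨i+1, hi1⟩, ⟨k, hk⟩, ⟨k+1, h1⟩, rfl, rfl,
      by simpa [Fin.lt_def] using h0, h2, h3, h4⟩

lemma wordOf_mem_permsF {n : ℕ} (π : Equiv.Perm (Fin n)) :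
    wordOf π ∈ permsF (Finset.range n) := by
  rw [mem_permsF]
  apply List.perm_of_nodup_nodup_toFinset_eq
  · rw [wordOf, List.nodup_ofFn]
    exact Fin.val_injective.comp π.injective
  · exact Finset.nodup_toList _
  · rw [Finset.toList_toFinset]
    ext x
    simp only [wordOf, List.mem_toFinset, List.mem_ofFn, Set.mem_range, Finset.mem_range]
    constructor
    · rintro ⟨i, rfl⟩; exact (π i).isLt
    · intro hx; exact ⟨π.symm ⟨x, hx⟩, by simp⟩

theorem stmt14 (n : ℕ) (hn : 1 ≤ n) :
    Nat.card {π : Equiv.Perm (Fin n) // ¬ Contains213 π ∧ ¬ Contains34'21 π}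
      = (n - 1) * 2 ^ (n - 2) + 1 := by
  have hiff : ∀ π : Equiv.Perm (Fin n),
      (¬ Contains213 π ∧ ¬ Contains34'21 π) ↔ GoodL (wordOf π) := by
    intro π
    rw [GoodL, contains213_iff, contains3421_iff]
  rw [Nat.card_congr (Equiv.subtypeEquivRight hiff), Nat.card_eq_fintype_card,
    Fintype.card_subtype]
  rw [← card_good n (Finset.range n) (Finset.card_range n) hn]
  refine Finset.card_bij (fun π _ => wordOf π) ?_ ?_ ?_
  · intro π hπ
    simp only [Finset.mem_filter] at hπ ⊢
    exact ⟨wordOf_mem_permsF π, hπ.2⟩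
  · intro π1 h1 π2 h2 he
    apply Equiv.ext
    intro i
    have := List.ofFn_inj.1 he
    exact Fin.val_injective (congrFun this i)
  · intro l hl
    simp only [Finset.mem_filter] at hl
    obtain ⟨hlp, hlg⟩ := hl
    have hlen : l.length = n := (permsF_length hlp).trans (Finset.card_range n)
    have hmem : ∀ x ∈ l, x < n := fun x hx =>
      Finset.mem_range.1 ((permsF_mem_iff hlp).1 hx)
    have hnd := permsF_nodup hlp
    have hbnd : ∀ i : Fin n, (i : ℕ) < l.length := fun i => by rw [hlen]; exact i.isLt
    set f : Fin n → Fin n := fun i =>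
      ⟨l[(i : ℕ)]'(hbnd i), hmem _ (List.getElem_mem _)⟩ with hf
    have hinj : Function.Injective f := by
      intro x y hxy
      have hv : l[(x : ℕ)]'(hbnd x) = l[(y : ℕ)]'(hbnd y) := congrArg Fin.val hxy
      exact Fin.ext ((List.Nodup.getElem_inj_iff hnd).1 hv)
    have hbij := Finite.injective_iff_bijective.1 hinj
    have hw : wordOf (Equiv.ofBijective f hbij) = l := by
      apply List.ext_getElem (by simp [wordOf_length, hlen])
      intro i h1 h2
      simp only [wordOf, List.getElem_ofFn]
      rfl
    exact ⟨Equiv.ofBijective f hbij, by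
      simp only [Finset.mem_filter, Finset.mem_univ, true_and]
      rw [hw]; exact hlg, hw⟩
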